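/- Let G = ⟨σ₁, σ₂⟩ ≅ C₂ × C₂ act over a field k of characteristic 2 on the 3-dimensional module V = Ω¹(k) with dual basis x₁, y₁, y₂ of V* where σ_i(y_j) = y_j, σ₁(x₁) = x₁ + y₁, σ₂(x₁) = x₁ + y₂. Then the ring of invariants is the polynomial ring k[V]^G = k[y₁, y₂, N(x₁)] where N(x₁) = Π_{g∈G} g·x₁ = x₁(x₁+y₁)(x₁+y₂)(x₁+y₁+y₂). -/

import Mathlib

open MvPolynomial

/-- The Klein four group `C₂ × C₂`. -/
abbrev K4 := Multiplicative (ZMod 2 × ZMod 2)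

/-- The first generator `σ₁` of the Klein four group. -/
def s1 : K4 := Multiplicative.ofAdd (1, 0)

/-- The second generator `σ₂` of the Klein four group. -/
def s2 : K4 := Multiplicative.ofAdd (0, 1)

/-- The invariant subalgebra `R^G` of a `k`-algebra `R` with a `k`-linear
action of `G`. -/
def invAlgebra (k G R : Type) [CommSemiring k] [Group G] [CommRing R] [Algebra k R]
    [MulSemiringAction G R] [SMulCommClass G k R] : Subalgebra k R where
  carrier := {f : R | ∀ g : G, g • f = f}
  mul_mem' := fun ha hb g => by rw [smul_mul', ha g, hb g]
  add_mem' := fun ha hb g => by rw [smul_add, ha g, hb g]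
  algebraMap_mem' := fun a g => by
    rw [Algebra.algebraMap_eq_smul_one, smul_comm, smul_one]


section Aux

variable {k : Type} [Field k] [CharP k 2]

lemma aux_coeff_eq (c : MvPolynomial (Fin 2) k) (F : Polynomial (MvPolynomial (Fin 2) k))
    (hd : F.natDegree ≤ 3)
    (h : F.comp (Polynomial.X + Polynomial.C c) = F) :
    (F.coeff 3 = 0 ∨ c = 0) ∧
      F.coeff 1 * c + F.coeff 2 * c ^ 2 + F.coeff 3 * c ^ 3 = 0 := by
  obtain ⟨a0, a1, a2, a3, hF, h0', h1', h2', h3'⟩ :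
      ∃ a0 a1 a2 a3, F = Polynomial.C a0 + Polynomial.C a1 * Polynomial.X
        + Polynomial.C a2 * Polynomial.X ^ 2 + Polynomial.C a3 * Polynomial.X ^ 3
        ∧ F.coeff 0 = a0 ∧ F.coeff 1 = a1 ∧ F.coeff 2 = a2 ∧ F.coeff 3 = a3 := by
    refine ⟨F.coeff 0, F.coeff 1, F.coeff 2, F.coeff 3, ?_, rfl, rfl, rfl, rfl⟩
    have h4 := Polynomial.as_sum_range' F 4 (by omega)
    rw [h4]
    simp [Finset.sum_range_succ, ← Polynomial.C_mul_X_pow_eq_monomial]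
  have key2 : (Polynomial.X + Polynomial.C c) ^ 2
      = Polynomial.X ^ 2 + Polynomial.C (c ^ 2) := by
    rw [CharTwo.add_sq, map_pow]
  have key3 : (Polynomial.X + Polynomial.C c) ^ 3
      = Polynomial.X ^ 3 + Polynomial.C c * Polynomial.X ^ 2
        + Polynomial.C (c ^ 2) * Polynomial.X + Polynomial.C (c ^ 3) := by
    have h3 : (Polynomial.X + Polynomial.C c) ^ 3
        = (Polynomial.X + Polynomial.C c) ^ 2 * (Polynomial.X + Polynomial.C c) := by ring
    rw [h3, key2]
    simp only [map_pow]
    ring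
  have h' : Polynomial.C (a0 + a1 * c + a2 * c ^ 2 + a3 * c ^ 3)
      + Polynomial.C (a1 + a3 * c ^ 2) * Polynomial.X
      + Polynomial.C (a2 + a3 * c) * Polynomial.X ^ 2
      + Polynomial.C a3 * Polynomial.X ^ 3
      = Polynomial.C a0 + Polynomial.C a1 * Polynomial.X
        + Polynomial.C a2 * Polynomial.X ^ 2 + Polynomial.C a3 * Polynomial.X ^ 3 := by
    conv_rhs => rw [← hF, ← h, hF]
    simp only [Polynomial.add_comp, Polynomial.mul_comp, Polynomial.C_comp, Polynomial.X_comp,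
      Polynomial.pow_comp, key2, key3, map_add, map_mul, map_pow]
    ring
  have e2 : a3 = 0 ∨ c = 0 := by
    have h2c := congrArg (fun p => Polynomial.coeff p 2) h'
    simp only [Polynomial.coeff_add, Polynomial.coeff_C_mul, Polynomial.coeff_X_pow,
      Polynomial.coeff_C, Polynomial.coeff_X] at h2c
    norm_num at h2c
    exact h2c
  have e0 : a0 + a1 * c + a2 * c ^ 2 + a3 * c ^ 3 = a0 := by
    have h0c := congrArg (fun p => Polynomial.coeff p 0) h'
    simp only [Polynomial.coeff_add, Polynomial.coeff_C_mul, Polynomial.coeff_X_pow,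
      Polynomial.coeff_C, Polynomial.coeff_X] at h0c
    norm_num at h0c
    convert h0c using 1 <;> ring
  rw [h1', h2', h3']
  exact ⟨e2, by linear_combination e0⟩

lemma aux_base (F : Polynomial (MvPolynomial (Fin 2) k))
    (hd : F.natDegree ≤ 3)
    (h0 : F.comp (Polynomial.X + Polynomial.C (X 0)) = F)
    (h1 : F.comp (Polynomial.X + Polynomial.C (X 1)) = F) :
    F = Polynomial.C (F.coeff 0) := by
  obtain ⟨e30, e10⟩ := aux_coeff_eq (X 0) F hd h0
  obtain ⟨e31, e11⟩ := aux_coeff_eq (X 1) F hd h1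
  have hx0 : (X 0 : MvPolynomial (Fin 2) k) ≠ 0 := MvPolynomial.X_ne_zero 0
  have hx1 : (X 1 : MvPolynomial (Fin 2) k) ≠ 0 := MvPolynomial.X_ne_zero 1
  have hx01 : (X 0 : MvPolynomial (Fin 2) k) ≠ X 1 := by
    intro hxy
    have := MvPolynomial.X_injective hxy
    simp at this
  have h3 : F.coeff 3 = 0 := by
    rcases e30 with h | h
    · exact h
    · exact absurd h hx0
  rw [h3] at e10 e11
  have f0 : X 0 * (F.coeff 1 + F.coeff 2 * X 0) = 0 := by linear_combination e10
  have f1 : X 1 * (F.coeff 1 + F.coeff 2 * X 1) = 0 := by linear_combination e11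
  have g0 : F.coeff 1 + F.coeff 2 * X 0 = 0 := by
    rcases mul_eq_zero.mp f0 with h | h
    · exact absurd h hx0
    · exact h
  have g1 : F.coeff 1 + F.coeff 2 * X 1 = 0 := by
    rcases mul_eq_zero.mp f1 with h | h
    · exact absurd h hx1
    · exact h
  have h2' : F.coeff 2 * (X 0 - X 1) = 0 := by linear_combination g0 - g1
  have h2 : F.coeff 2 = 0 := by
    rcases mul_eq_zero.mp h2' with h | h
    · exact h
    · exact absurd (sub_eq_zero.mp h) hx01
  have h1c : F.coeff 1 = 0 := by
    have := g0
    rw [h2] at this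
    simpa using this
  refine Polynomial.ext fun n => ?_
  match n with
  | 0 => simp
  | 1 => simpa using h1c
  | 2 => simpa using h2
  | 3 => simpa using h3
  | (m + 4) =>
    rw [Polynomial.coeff_eq_zero_of_natDegree_lt (lt_of_le_of_lt hd (by omega))]
    simp [Polynomial.coeff_C]

lemma aux_C_mem (a : MvPolynomial (Fin 2) k) (P : Polynomial (MvPolynomial (Fin 2) k)) :
    Polynomial.C a ∈ Algebra.adjoin k
      ({Polynomial.C (X 0), Polynomial.C (X 1), P} :
        Set (Polynomial (MvPolynomial (Fin 2) k))) := by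
  let f : MvPolynomial (Fin 2) k →ₐ[k] Polynomial (MvPolynomial (Fin 2) k) :=
    IsScalarTower.toAlgHom k _ _
  have hfa : f a = Polynomial.C a := by
    simp [f, IsScalarTower.coe_toAlgHom', Polynomial.algebraMap_eq]
  have ha : a ∈ Algebra.adjoin k ({X 0, X 1} : Set (MvPolynomial (Fin 2) k)) := by
    have hr : (Set.range (X : Fin 2 → MvPolynomial (Fin 2) k)) = {X 0, X 1} := by
      ext p
      constructor
      · rintro ⟨i, rfl⟩
        fin_cases i <;> simp
      · rintro (rfl | rfl)
        · exact ⟨0, rfl⟩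
        · exact ⟨1, rfl⟩
    rw [← hr, MvPolynomial.adjoin_range_X]
    trivial
  have hmem : Polynomial.C a ∈ (Algebra.adjoin k ({X 0, X 1} :
      Set (MvPolynomial (Fin 2) k))).map f := ⟨a, ha, hfa⟩
  rw [AlgHom.map_adjoin] at hmem
  refine Algebra.adjoin_mono ?_ hmem
  rw [Set.image_insert_eq, Set.image_singleton]
  intro p hp
  rcases hp with rfl | rfl
  · rw [show f (X 0) = Polynomial.C (X 0) by
      simp [f, IsScalarTower.coe_toAlgHom', Polynomial.algebraMap_eq]]
    exact Set.mem_insert _ _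
  · rw [show f (X 1) = Polynomial.C (X 1) by
      simp [f, IsScalarTower.coe_toAlgHom', Polynomial.algebraMap_eq]]
    exact Set.mem_insert_of_mem _ (Set.mem_insert _ _)

lemma aux_key (P : Polynomial (MvPolynomial (Fin 2) k))
    (hPm : P.Monic) (hPd : P.natDegree = 4)
    (hP0 : P.comp (Polynomial.X + Polynomial.C (X 0)) = P)
    (hP1 : P.comp (Polynomial.X + Polynomial.C (X 1)) = P) :
    ∀ (n : ℕ) (F : Polynomial (MvPolynomial (Fin 2) k)), F.natDegree ≤ n →
      F.comp (Polynomial.X + Polynomial.C (X 0)) = F →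
      F.comp (Polynomial.X + Polynomial.C (X 1)) = F →
      F ∈ Algebra.adjoin k
        ({Polynomial.C (X 0), Polynomial.C (X 1), P} :
          Set (Polynomial (MvPolynomial (Fin 2) k))) := by
  intro n
  induction n using Nat.strong_induction_on with
  | _ n ih =>
    intro F hdF h0 h1
    by_cases hsmall : F.natDegree ≤ 3
    · rw [aux_base F hsmall h0 h1]
      exact aux_C_mem _ _
    · push_neg at hsmall
      have hFQR : F %ₘ P + P * (F /ₘ P) = F := Polynomial.modByMonic_add_div F P
      have hdegR : (F %ₘ P).degree < P.degree := Polynomial.degree_modByMonic_lt F hPm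
      have main : ∀ c : MvPolynomial (Fin 2) k,
          P.comp (Polynomial.X + Polynomial.C c) = P →
          F.comp (Polynomial.X + Polynomial.C c) = F →
          (F /ₘ P).comp (Polynomial.X + Polynomial.C c) = F /ₘ P ∧
            (F %ₘ P).comp (Polynomial.X + Polynomial.C c) = F %ₘ P := by
        intro c hPc hFc
        have hlm : (Polynomial.X + Polynomial.C c :
            Polynomial (MvPolynomial (Fin 2) k)).Monic := Polynomial.monic_X_add_C c
        have hld : (Polynomial.X + Polynomial.C c :
            Polynomial (MvPolynomial (Fin 2) k)).natDegree = 1 :=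
          Polynomial.natDegree_X_add_C c
        have hdegRc : ((F %ₘ P).comp (Polynomial.X + Polynomial.C c)).degree < P.degree := by
          rcases eq_or_ne (F %ₘ P) 0 with hz | hz
          · rw [hz, Polynomial.zero_comp]
            rw [hz] at hdegR
            exact hdegR
          · have hcompne : (F %ₘ P).comp (Polynomial.X + Polynomial.C c) ≠ 0 := by
              intro hzz
              have hlc := Polynomial.leadingCoeff_comp
                (p := F %ₘ P) (q := Polynomial.X + Polynomial.C c) (by rw [hld]; norm_num)
              rw [hzz, Polynomial.leadingCoeff_zero, hlm.leadingCoeff, one_pow, mul_one] at hlc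
              exact hz (Polynomial.leadingCoeff_eq_zero.mp hlc.symm)
            rw [Polynomial.degree_eq_natDegree hcompne, Polynomial.natDegree_comp, hld, mul_one,
              ← Polynomial.degree_eq_natDegree hz]
            exact hdegR
        have heq : (F %ₘ P).comp (Polynomial.X + Polynomial.C c)
            + P * (F /ₘ P).comp (Polynomial.X + Polynomial.C c) = F := by
          calc (F %ₘ P).comp (Polynomial.X + Polynomial.C c)
              + P * (F /ₘ P).comp (Polynomial.X + Polynomial.C c)
              = (F %ₘ P).comp (Polynomial.X + Polynomial.C c)
                + P.comp (Polynomial.X + Polynomial.C c)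
                  * (F /ₘ P).comp (Polynomial.X + Polynomial.C c) := by rw [hPc]
            _ = (F %ₘ P + P * (F /ₘ P)).comp (Polynomial.X + Polynomial.C c) := by
                rw [Polynomial.add_comp, Polynomial.mul_comp]
            _ = F := by rw [hFQR, hFc]
        obtain ⟨hQu, hRu⟩ := Polynomial.div_modByMonic_unique
          ((F /ₘ P).comp (Polynomial.X + Polynomial.C c))
          ((F %ₘ P).comp (Polynomial.X + Polynomial.C c)) hPm ⟨heq, hdegRc⟩
        exact ⟨hQu.symm, hRu.symm⟩
      obtain ⟨hQ0, hR0⟩ := main (X 0) hP0 h0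
      obtain ⟨hQ1, hR1⟩ := main (X 1) hP1 h1
      have hdQ : (F /ₘ P).natDegree = F.natDegree - 4 := by
        rw [Polynomial.natDegree_divByMonic F hPm, hPd]
      have hdR : (F %ₘ P).natDegree ≤ 3 := by
        rcases eq_or_ne (F %ₘ P) 0 with hz | hz
        · simp [hz]
        · have := Polynomial.natDegree_lt_natDegree hz hdegR
          omega
      have memQ := ih (n - 1) (by omega) (F /ₘ P) (by omega) hQ0 hQ1
      have memR := ih (n - 1) (by omega) (F %ₘ P) (by omega) hR0 hR1
      rw [← hFQR]
      exact add_mem memR (mul_mem (Algebra.subset_adjoin (by simp)) memQ)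

end Aux

/-- for the Klein four group acting on the 3-dimensional module
`V = Ω¹(k)` in characteristic 2 (with `x₁ = X 0`, `y₁ = X 1`, `y₂ = X 2`), the
ring of invariants is the polynomial ring `k[V]^G = k[y₁, y₂, N(x₁)]`, where
`N(x₁) = Π_{g∈G} g·x₁ = x₁(x₁+y₁)(x₁+y₂)(x₁+y₁+y₂)`. -/
theorem klein_omega_one_invariant_ring
    (k : Type) [Field k] [CharP k 2]
    [MulSemiringAction K4 (MvPolynomial (Fin 3) k)]
    [SMulCommClass K4 k (MvPolynomial (Fin 3) k)]
    (hy1 : s1 • (X 1 : MvPolynomial (Fin 3) k) = X 1)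
    (hy1' : s2 • (X 1 : MvPolynomial (Fin 3) k) = X 1)
    (hy2 : s1 • (X 2 : MvPolynomial (Fin 3) k) = X 2)
    (hy2' : s2 • (X 2 : MvPolynomial (Fin 3) k) = X 2)
    (hx1 : s1 • (X 0 : MvPolynomial (Fin 3) k) = X 0 + X 1)
    (hx2 : s2 • (X 0 : MvPolynomial (Fin 3) k) = X 0 + X 2) :
    (∏ g : K4, g • (X 0 : MvPolynomial (Fin 3) k) =
      X 0 * (X 0 + X 1) * (X 0 + X 2) * (X 0 + X 1 + X 2)) ∧
    invAlgebra k K4 (MvPolynomial (Fin 3) k) =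
      Algebra.adjoin k {X 1, X 2, ∏ g : K4, g • (X 0 : MvPolynomial (Fin 3) k)} ∧
    AlgebraicIndependent k
      ![(X 1 : MvPolynomial (Fin 3) k), X 2, ∏ g : K4, g • (X 0 : MvPolynomial (Fin 3) k)] := by
  classical
  have hgcases : ∀ g : K4, g = 1 ∨ g = s1 ∨ g = s2 ∨ g = s1 * s2 := by decide
  have hx12 : (s1 * s2) • (X 0 : MvPolynomial (Fin 3) k) = X 0 + X 1 + X 2 := by
    rw [mul_smul, hx2, smul_add, hx1, hy2]
  have hX1 : ∀ g : K4, g • (X 1 : MvPolynomial (Fin 3) k) = X 1 := by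
    intro g
    rcases hgcases g with rfl | rfl | rfl | rfl
    · exact one_smul _ _
    · exact hy1
    · exact hy1'
    · rw [mul_smul, hy1', hy1]
  have hX2 : ∀ g : K4, g • (X 2 : MvPolynomial (Fin 3) k) = X 2 := by
    intro g
    rcases hgcases g with rfl | rfl | rfl | rfl
    · exact one_smul _ _
    · exact hy2
    · exact hy2'
    · rw [mul_smul, hy2', hy2]
  have huniv : (Finset.univ : Finset K4) = {1, s1, s2, s1 * s2} := by decide
  have hprod : ∏ g : K4, g • (X 0 : MvPolynomial (Fin 3) k)
      = X 0 * (X 0 + X 1) * (X 0 + X 2) * (X 0 + X 1 + X 2) := by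
    rw [huniv, Finset.prod_insert (by decide), Finset.prod_insert (by decide),
      Finset.prod_insert (by decide), Finset.prod_singleton, one_smul, hx1, hx2, hx12]
    ring
  have hNinv : ∀ g : K4,
      g • (∏ h : K4, h • (X 0 : MvPolynomial (Fin 3) k)) = ∏ h : K4, h • X 0 := by
    intro g
    rw [Finset.smul_prod']
    exact Fintype.prod_equiv (Equiv.mulLeft g) _ _ (fun h => (mul_smul g h _).symm)
  set N := ∏ g : K4, g • (X 0 : MvPolynomial (Fin 3) k) with hNdef
  set e := MvPolynomial.finSuccEquiv k 2 with hedef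
  have heX0 : e (X 0) = Polynomial.X := MvPolynomial.finSuccEquiv_X_zero
  have heX1 : e (X 1) = Polynomial.C (X 0) := by
    have h1 : (1 : Fin 3) = Fin.succ 0 := rfl
    rw [h1, MvPolynomial.finSuccEquiv_X_succ]
  have heX2 : e (X 2) = Polynomial.C (X 1) := by
    have h2 : (2 : Fin 3) = Fin.succ 1 := rfl
    rw [h2, MvPolynomial.finSuccEquiv_X_succ]
  have hesy1 : e.symm (Polynomial.C (X 0)) = X 1 := by rw [AlgEquiv.symm_apply_eq, heX1]
  have hesy2 : e.symm (Polynomial.C (X 1)) = X 2 := by rw [AlgEquiv.symm_apply_eq, heX2]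
  have hconj : ∀ (g : K4) (c : MvPolynomial (Fin 2) k),
      g • (X 0 : MvPolynomial (Fin 3) k) = X 0 + e.symm (Polynomial.C c) →
      ∀ f : MvPolynomial (Fin 3) k,
        e (g • f) = (e f).comp (Polynomial.X + Polynomial.C c) := by
    intro g c hg f
    have hhom : e.toAlgHom.comp (MulSemiringAction.toAlgHom k (MvPolynomial (Fin 3) k) g)
        = ((Polynomial.aeval (Polynomial.X + Polynomial.C c)).restrictScalars k).comp
            e.toAlgHom := by
      apply MvPolynomial.algHom_ext
      intro i
      fin_cases i <;>
        simp [MulSemiringAction.toAlgHom_apply, hg, hX1 g, hX2 g, heX0, heX1, heX2,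
          Polynomial.algebraMap_eq, AlgEquiv.apply_symm_apply, map_add]
    have hff := DFunLike.congr_fun hhom f
    simpa [Polynomial.comp_eq_aeval] using hff
  have hs1c : s1 • (X 0 : MvPolynomial (Fin 3) k) = X 0 + e.symm (Polynomial.C (X 0)) := by
    rw [hesy1]
    exact hx1
  have hs2c : s2 • (X 0 : MvPolynomial (Fin 3) k) = X 0 + e.symm (Polynomial.C (X 1)) := by
    rw [hesy2]
    exact hx2
  have hP' : e N = Polynomial.X * (Polynomial.X + Polynomial.C (X 0))
      * (Polynomial.X + Polynomial.C (X 1)) * (Polynomial.X + Polynomial.C (X 0 + X 1)) := by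
    rw [hprod]
    simp only [map_mul, map_add, heX0, heX1, heX2]
    ring
  have hPm : (e N).Monic := by
    rw [hP']
    exact ((Polynomial.monic_X.mul (Polynomial.monic_X_add_C _)).mul
      (Polynomial.monic_X_add_C _)).mul (Polynomial.monic_X_add_C _)
  have hPd : (e N).natDegree = 4 := by
    have m1 := Polynomial.monic_X.mul
      (Polynomial.monic_X_add_C (X 0 : MvPolynomial (Fin 2) k))
    have m2 := m1.mul (Polynomial.monic_X_add_C (X 1 : MvPolynomial (Fin 2) k))
    rw [hP', m2.natDegree_mul (Polynomial.monic_X_add_C _),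
      m1.natDegree_mul (Polynomial.monic_X_add_C _),
      Polynomial.monic_X.natDegree_mul (Polynomial.monic_X_add_C _),
      Polynomial.natDegree_X, Polynomial.natDegree_X_add_C, Polynomial.natDegree_X_add_C,
      Polynomial.natDegree_X_add_C]
  have hPinv0 : (e N).comp (Polynomial.X + Polynomial.C (X 0)) = e N := by
    rw [← hconj s1 (X 0) hs1c N, hNinv s1]
  have hPinv1 : (e N).comp (Polynomial.X + Polynomial.C (X 1)) = e N := by
    rw [← hconj s2 (X 1) hs2c N, hNinv s2]
  have hsub : invAlgebra k K4 (MvPolynomial (Fin 3) k)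
      ≤ Algebra.adjoin k ({X 1, X 2, N} : Set (MvPolynomial (Fin 3) k)) := by
    intro f hf
    have hf' : ∀ g : K4, g • f = f := hf
    have h0 : (e f).comp (Polynomial.X + Polynomial.C (X 0)) = e f := by
      rw [← hconj s1 (X 0) hs1c f, hf' s1]
    have h1 : (e f).comp (Polynomial.X + Polynomial.C (X 1)) = e f := by
      rw [← hconj s2 (X 1) hs2c f, hf' s2]
    have hmem := aux_key (e N) hPm hPd hPinv0 hPinv1 (e f).natDegree (e f) le_rfl h0 h1
    have hmem2 : e.symm (e f) ∈ (Algebra.adjoin k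
        ({Polynomial.C (X 0), Polynomial.C (X 1), e N} :
          Set (Polynomial (MvPolynomial (Fin 2) k)))).map e.symm.toAlgHom :=
      ⟨e f, hmem, rfl⟩
    rw [AlgHom.map_adjoin] at hmem2
    have himg : e.symm.toAlgHom '' {Polynomial.C (X 0), Polynomial.C (X 1), e N}
        = ({X 1, X 2, N} : Set (MvPolynomial (Fin 3) k)) := by
      rw [Set.image_insert_eq, Set.image_insert_eq, Set.image_singleton]
      simp only [AlgEquiv.toAlgHom_eq_coe, AlgEquiv.coe_toAlgHom]
      rw [hesy1, hesy2, AlgEquiv.symm_apply_apply]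
    rw [himg] at hmem2
    rw [← e.symm_apply_apply f]
    exact hmem2
  have hsup : Algebra.adjoin k ({X 1, X 2, N} : Set (MvPolynomial (Fin 3) k))
      ≤ invAlgebra k K4 (MvPolynomial (Fin 3) k) := by
    rw [Algebra.adjoin_le_iff]
    rintro x (rfl | rfl | rfl)
    · exact hX1
    · exact hX2
    · exact hNinv
  refine ⟨hprod, le_antisymm hsub hsup, ?_⟩
  set ψ : MvPolynomial (Fin 3) k →ₐ[k] Polynomial (MvPolynomial (Fin 2) k) :=
    MvPolynomial.aeval ![Polynomial.C (X 0), Polynomial.C (X 1), Polynomial.X] with hpsidef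
  have hψinj : Function.Injective ψ := by
    have hcompψ : ψ = e.toAlgHom.comp
        (MvPolynomial.rename (![1, 2, 0] : Fin 3 → Fin 3)) := by
      apply MvPolynomial.algHom_ext
      intro i
      fin_cases i <;>
        simp [hpsidef, MvPolynomial.rename_X, heX0, heX1, heX2]
    rw [hcompψ, AlgHom.coe_comp]
    exact Function.Injective.comp e.injective
      (MvPolynomial.rename_injective _ (by decide))
  have hcomm : e.toAlgHom.comp (MvPolynomial.aeval ![X 1, X 2, N])
      = ((Polynomial.aeval (e N)).restrictScalars k).comp ψ := by
    apply MvPolynomial.algHom_ext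
    intro i
    fin_cases i <;>
      simp [hpsidef, heX1, heX2, Polynomial.aeval_X, Polynomial.aeval_C,
        Polynomial.algebraMap_eq]
  rw [algebraicIndependent_iff_injective_aeval]
  refine (injective_iff_map_eq_zero
    (MvPolynomial.aeval (R := k) ![(X 1 : MvPolynomial (Fin 3) k), X 2, N])).mpr ?_
  intro p hp
  have h1 : (ψ p).comp (e N) = 0 := by
    have hcp := DFunLike.congr_fun hcomm p
    simp only [AlgHom.coe_comp, Function.comp_apply, AlgHom.coe_restrictScalars',
      AlgEquiv.toAlgHom_eq_coe, AlgHom.coe_coe] at hcp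
    rw [hp, map_zero] at hcp
    rw [Polynomial.comp_eq_aeval]
    exact hcp.symm
  have hψp : ψ p = 0 := by
    by_contra hne
    have hlc := Polynomial.leadingCoeff_comp (p := ψ p) (q := e N) (by rw [hPd]; norm_num)
    rw [h1, Polynomial.leadingCoeff_zero, hPm.leadingCoeff, one_pow, mul_one] at hlc
    exact hne (Polynomial.leadingCoeff_eq_zero.mp hlc.symm)
  exact hψinj (by rw [hψp, map_zero])
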